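/- arXiv:1910.09609 — 3 statements merged into one kernel-verified Lean document; each statement's English description precedes it below -/
import Mathlib

section
/- Let G be a residually finite group such that the set of nontrivial elements of finite order in G is contained in finitely many conjugacy classes. Then G has a torsion-free normal subgroup of finite index. -/
open Pointwise

section ActionDefs

variable (G : Type*) (X : Type*) [Group G] [MetricSpace X] [MulAction G X]

/-- The action of `G` on `X` is by isometries. -/
def IsIsometricAction : Prop := ∀ g : G, Isometry fun x : X => g • x

/-- The action of `G` on `X` is properly discontinuous: for every compact `K`,
the set of `g` with `(g • K) ∩ K ≠ ∅` is finite. -/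
def IsProperlyDiscontinuousAction : Prop :=
  ∀ K : Set X, IsCompact K → Set.Finite {g : G | ((g • K) ∩ K).Nonempty}

/-- The action of `G` on `X` is cocompact: some compact `K` has orbit covering `X`. -/
def IsCocompactAction : Prop :=
  ∃ K : Set X, IsCompact K ∧ ⋃ g : G, g • K = Set.univ

/-- A geometric action: by isometries, properly discontinuous, and cocompact. -/
def IsGeometricAction : Prop :=
  IsIsometricAction G X ∧ IsProperlyDiscontinuousAction G X ∧ IsCocompactAction G X

end ActionDefs

/-- A metric space is geodesic if any two points are joined by an isometrically
embedded copy of the interval `[0, dist x y]`. -/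
def IsGeodesicSpace (X : Type*) [MetricSpace X] : Prop :=
  ∀ x y : X, ∃ γ : Set.Icc (0 : ℝ) (dist x y) → X, Isometry γ ∧
    γ ⟨0, Set.left_mem_Icc.mpr dist_nonneg⟩ = x ∧
    γ ⟨dist x y, Set.right_mem_Icc.mpr dist_nonneg⟩ = y

/-- Two groups have a common model geometry if they both act geometrically on the same
nonempty proper geodesic metric space. -/
def HasCommonModelGeometry (G G' : Type*) [Group G] [Group G'] : Prop :=
  ∃ (X : Type) (_ : MetricSpace X) (_ : Nonempty X) (_ : ProperSpace X)
    (_ : MulAction G X) (_ : MulAction G' X),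
    IsGeodesicSpace X ∧ IsGeometricAction G X ∧ IsGeometricAction G' X

/-- An `(L, A)`-quasi-isometry between metric spaces. -/
def IsQuasiIsometry {X Y : Type*} [MetricSpace X] [MetricSpace Y] (L A : ℝ) (f : X → Y) : Prop :=
  (∀ x x' : X, (1 / L) * dist x x' - A ≤ dist (f x) (f x') ∧
    dist (f x) (f x') ≤ L * dist x x' + A) ∧
  ∀ y : Y, ∃ x : X, dist y (f x) ≤ A

/-- A group is residually finite if every nontrivial element survives in some finite quotient. -/
def ResiduallyFinite (G : Type*) [Group G] : Prop :=
  ∀ g : G, g ≠ 1 → ∃ (Q : Type) (_ : Group Q) (_ : Finite Q) (φ : G →* Q), φ g ≠ 1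

/-- Two groups are abstractly commensurable if they have isomorphic finite-index subgroups. -/
def AbstractlyCommensurable (G G' : Type*) [Group G] [Group G'] : Prop :=
  ∃ (H : Subgroup G) (H' : Subgroup G'), H.FiniteIndex ∧ H'.FiniteIndex ∧ Nonempty (H ≃* H')

/-- A residually finite group whose nontrivial finite-order elements lie in finitely many
conjugacy classes has a torsion-free normal subgroup of finite index. -/
theorem statement1 {G : Type*} [Group G]
    (hrf : ResiduallyFinite G)
    (hfc : ∃ S : Finset G, ∀ g : G, g ≠ 1 → IsOfFinOrder g → ∃ s ∈ S, IsConj s g) :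
    ∃ N : Subgroup G, N.Normal ∧ N.FiniteIndex ∧ (∀ g : N, g ≠ 1 → ¬IsOfFinOrder g) := by
  have key : ∀ s : G, ∃ K : Subgroup G, K.Normal ∧ K.FiniteIndex ∧ (s ≠ 1 → s ∉ K) := by
    intro s
    by_cases hs : s = 1
    · exact ⟨⊤, inferInstance, inferInstance, fun h => absurd hs h⟩
    · obtain ⟨Q, _, _, φ, hφ⟩ := hrf s hs
      refine ⟨φ.ker, inferInstance, ?_, fun _ hmem => hφ hmem⟩
      haveI : Finite (G ⧸ φ.ker) := Finite.of_injective _ (QuotientGroup.kerLift_injective φ)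
      exact Subgroup.finiteIndex_of_finite_quotient
  choose K hKn hKf hKs using key
  obtain ⟨S, hS⟩ := hfc
  refine ⟨⨅ s ∈ S, K s, ?_, ?_, ?_⟩
  · constructor
    intro n hn c
    simp only [Subgroup.mem_iInf] at hn ⊢
    intro s hsS
    exact (hKn s).conj_mem n (hn s hsS) c
  · exact Subgroup.finiteIndex_iInf' K (fun s _ => hKf s)
  · intro g hg hfin
    have hgG : (g : G) ≠ 1 := fun h => hg (Subtype.ext h)
    have hfinG : IsOfFinOrder (g : G) := (⨅ s ∈ S, K s).subtype.isOfFinOrder hfin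
    obtain ⟨s, hsS, hconj⟩ := hS g hgG hfinG
    have hs1 : s ≠ 1 := by
      rintro rfl
      exact hgG (isConj_one_right.mp hconj)
    have hgmem : (g : G) ∈ K s := by
      have := g.2
      simp only [Subgroup.mem_iInf] at this
      exact this s hsS
    obtain ⟨c, hc⟩ := isConj_iff.mp hconj
    refine hKs s hs1 ?_
    have h2 : c * s * c⁻¹ ∈ K s := hc ▸ hgmem
    have h3 := (hKn s).conj_mem _ h2 c⁻¹
    simpa [mul_assoc] using h3
end

section
/- Let X be a nonempty geodesic metric space, let B, ℓ > 0, and let 𝒰 be a collection of nonempty subsets of X whose union is X, such that every U ∈ 𝒰 has diameter at most B, and every subset of X of diameter less than ℓ is contained in some member of 𝒰. Let N be the nerve graph of 𝒰: the simple graph with vertex set 𝒰 in which distinct U, V ∈ 𝒰 are adjacent if and only if U ∩ V ≠ ∅. Then N is connected, and there exist constants L ≥ 1 and A ≥ 0, depending only on B and ℓ, such that for every map φ : X → 𝒰 satisfying x ∈ φ(x) for all x ∈ X, one has (1/L)·dist(x, x′) − A ≤ d_N(φ(x), φ(x′)) ≤ L·dist(x, x′) + A for all x, x′ ∈ X, where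 d_N denotes the graph metric on N; moreover every vertex of N is at graph distance at most 1 from the image of φ. -/
open Pointwise

/-- The nerve graph of a collection of subsets: vertices are the members of the collection,
and two distinct members are adjacent when they intersect. -/
def nerveGraph {X : Type*} (U : Set (Set X)) : SimpleGraph U where
  Adj A B := A ≠ B ∧ ((A : Set X) ∩ (B : Set X)).Nonempty
  symm := by
    constructor
    rintro A B ⟨hne, x, hxA, hxB⟩
    exact ⟨hne.symm, x, hxB, hxA⟩
  loopless := by
    constructor
    rintro A ⟨hne, -⟩
    exact hne rfl

section NerveAux

variable {X : Type} [MetricSpace X] {U : Set (Set X)}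

lemma nerve_walk_of_inter {V W : U} (h : ((V : Set X) ∩ (W : Set X)).Nonempty) :
    ∃ p : (nerveGraph U).Walk V W, p.length ≤ 1 := by
  by_cases hVW : V = W
  · subst hVW; exact ⟨.nil, by simp⟩
  · exact ⟨.cons (show (nerveGraph U).Adj V W from ⟨hVW, h⟩) .nil, by simp⟩

lemma nerve_chain_walk (f : ℕ → U) :
    ∀ n : ℕ, (∀ i < n, ((f i : Set X) ∩ (f (i + 1) : Set X)).Nonempty) →
      ∃ p : (nerveGraph U).Walk (f 0) (f n), p.length ≤ n := by
  intro n
  induction n with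
  | zero => exact fun _ => ⟨.nil, by simp⟩
  | succ n ih =>
    intro h
    obtain ⟨p, hp⟩ := ih fun i hi => h i (hi.trans (Nat.lt_succ_self n))
    obtain ⟨q, hq⟩ := nerve_walk_of_inter (h n (Nat.lt_succ_self n))
    exact ⟨p.append q, by
      rw [SimpleGraph.Walk.length_append]; omega⟩

lemma dist_le_of_nerve_walk {B : ℝ} (hB : 0 ≤ B)
    (hBd : ∀ V ∈ U, EMetric.diam (V : Set X) ≤ ENNReal.ofReal B) :
    ∀ {V W : U} (p : (nerveGraph U).Walk V W) (a : X), a ∈ (V : Set X) →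
      ∀ b ∈ (W : Set X), dist a b ≤ B * (p.length + 1) := by
  intro V W p
  induction p with
  | @nil u =>
    intro a ha b hb
    have h1 : dist a b ≤ B := (edist_le_ofReal hB).mp
      (le_trans (EMetric.edist_le_diam_of_mem ha hb) (hBd _ u.2))
    simpa using h1.trans (by nlinarith)
  | @cons u v w hadj p ih =>
    intro a ha b hb
    have hadj' : u ≠ v ∧ ((u : Set X) ∩ (v : Set X)).Nonempty := hadj
    obtain ⟨hne, c, hcV, hcV'⟩ := hadj'
    have h1 : dist a c ≤ B := (edist_le_ofReal hB).mp
      (le_trans (EMetric.edist_le_diam_of_mem ha hcV) (hBd _ u.2))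
    have h2 := ih c hcV' b hb
    have h3 : (((SimpleGraph.Walk.cons hadj p)).length : ℝ) = p.length + 1 := by
      rw [SimpleGraph.Walk.length_cons]; push_cast; ring
    calc dist a b ≤ dist a c + dist c b := dist_triangle _ _ _
      _ ≤ B + B * (p.length + 1) := add_le_add h1 h2
      _ = B * (((SimpleGraph.Walk.cons hadj p)).length + 1) := by rw [h3]; ring

lemma nerve_chain {ℓ : ℝ} (hℓ : 0 < ℓ) (hgeo : IsGeodesicSpace X)
    (hsmall : ∀ S : Set X, EMetric.diam S < ENNReal.ofReal ℓ → ∃ V ∈ U, S ⊆ V)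
    (V W : U) (x x' : X) (hx : x ∈ (V : Set X)) (hx' : x' ∈ (W : Set X)) :
    ∃ p : (nerveGraph U).Walk V W, (p.length : ℝ) ≤ (2 / ℓ) * dist x x' + 2 := by
  obtain ⟨γ, hiso, hγ0, hγD⟩ := hgeo x x'
  have hD0 : (0 : ℝ) ≤ dist x x' := dist_nonneg
  set n : ℕ := max (Nat.ceil (2 * dist x x' / ℓ)) 1 with hn
  have hn1 : 1 ≤ n := le_max_right _ _
  have hnpos : (0 : ℝ) < n := by exact_mod_cast Nat.lt_of_lt_of_le Nat.zero_lt_one hn1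
  have hnne : (n : ℝ) ≠ 0 := hnpos.ne'
  have hceil : 2 * dist x x' / ℓ ≤ (n : ℝ) :=
    le_trans (Nat.le_ceil _) (by exact_mod_cast le_max_left _ _)
  have hstep : dist x x' / n ≤ ℓ / 2 := by
    rw [div_le_div_iff₀ hnpos (by norm_num)]
    have := (div_le_iff₀ hℓ).mp hceil
    nlinarith
  have hstep0 : (0 : ℝ) ≤ dist x x' / n := div_nonneg hD0 hnpos.le
  have htmem : ∀ i : ℕ, (min i n : ℝ) * (dist x x' / n) ∈ Set.Icc (0 : ℝ) (dist x x') := by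
    intro i
    constructor
    · positivity
    · calc (min i n : ℝ) * (dist x x' / n) ≤ (n : ℝ) * (dist x x' / n) := by
            apply mul_le_mul_of_nonneg_right _ hstep0
            exact min_le_right _ _
        _ = dist x x' := by field_simp
  set pt : ℕ → X := fun i => γ ⟨(min i n : ℝ) * (dist x x' / n), htmem i⟩ with hptdef
  have hpt0 : pt 0 = x := by
    have e : (⟨(min (0 : ℕ) n : ℝ) * (dist x x' / n), htmem 0⟩ : Set.Icc (0 : ℝ) (dist x x')) =
        ⟨0, Set.left_mem_Icc.mpr dist_nonneg⟩ := by
      rw [Subtype.mk.injEq]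
      push_cast
      rw [min_eq_left (by positivity), zero_mul]
    calc pt 0 = γ ⟨(min (0 : ℕ) n : ℝ) * (dist x x' / n), htmem 0⟩ := rfl
      _ = γ ⟨0, Set.left_mem_Icc.mpr dist_nonneg⟩ := congrArg γ e
      _ = x := hγ0
  have hptn : pt n = x' := by
    have e : (⟨(min n n : ℝ) * (dist x x' / n), htmem n⟩ : Set.Icc (0 : ℝ) (dist x x')) =
        ⟨dist x x', Set.right_mem_Icc.mpr dist_nonneg⟩ := by
      rw [Subtype.mk.injEq, min_self]
      field_simp
    calc pt n = γ ⟨(min n n : ℝ) * (dist x x' / n), htmem n⟩ := rfl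
      _ = γ ⟨dist x x', Set.right_mem_Icc.mpr dist_nonneg⟩ := congrArg γ e
      _ = x' := hγD
  have hptdist : ∀ i : ℕ, i < n → dist (pt i) (pt (i + 1)) < ℓ := by
    intro i hi
    have h1 : (min i n : ℝ) = (i : ℝ) := min_eq_left (by exact_mod_cast hi.le)
    have h2 : (min (i + 1) n : ℝ) = (i : ℝ) + 1 := by
      rw [min_eq_left (by exact_mod_cast hi)]
    have e1 : dist (pt i) (pt (i + 1)) =
        |(min i n : ℝ) * (dist x x' / n) - (min ((i + 1 : ℕ) : ℝ) (n : ℝ)) * (dist x x' / n)| := by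
      simp only [hptdef]
      rw [hiso.dist_eq, Subtype.dist_eq, Real.dist_eq]
    rw [e1, h1]
    push_cast
    rw [h2]
    have : (i : ℝ) * (dist x x' / n) - ((i : ℝ) + 1) * (dist x x' / n) = -(dist x x' / n) := by
      ring
    rw [this, abs_neg, abs_of_nonneg hstep0]
    linarith
  have hVi : ∀ i : ℕ, ∃ Vi : U, i < n →
      pt i ∈ (Vi : Set X) ∧ pt (i + 1) ∈ (Vi : Set X) := by
    intro i
    by_cases hi : i < n
    · obtain ⟨Vi, hViU, hVisub⟩ := hsmall {pt i, pt (i + 1)} (by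
        show Metric.ediam _ < _
        rw [Metric.ediam_pair, edist_lt_ofReal]
        exact hptdist i hi)
      exact ⟨⟨Vi, hViU⟩, fun _ => ⟨hVisub (by simp), hVisub (by simp)⟩⟩
    · exact ⟨V, fun h => absurd h hi⟩
  choose g hg using hVi
  set f : ℕ → U := fun i => if i = 0 then V else if i ≤ n then g (i - 1) else W with hf
  have hf0 : f 0 = V := by simp [hf]
  have hfn : f (n + 1) = W := by
    simp only [hf]
    rw [if_neg (by omega), if_neg (by omega)]
  have hchain : ∀ i < n + 1, ((f i : Set X) ∩ (f (i + 1) : Set X)).Nonempty := by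
    intro i hi
    rcases Nat.eq_zero_or_pos i with h0 | hpos
    · subst h0
      refine ⟨pt 0, ?_, ?_⟩
      · rw [hf0, hpt0]; exact hx
      · have h1 : f 1 = g 0 := by
          simp only [hf]; rw [if_neg one_ne_zero, if_pos hn1]
        rw [h1]
        exact (hg 0 (by omega)).1
    · have hfi : f i = g (i - 1) := by
        simp only [hf]; rw [if_neg (by omega), if_pos (by omega)]
      rcases Nat.lt_or_ge i n with hin | hin
      · have hfi1 : f (i + 1) = g i := by
          simp only [hf]
          rw [if_neg (by omega), if_pos (by omega)]
          exact congrArg g (by omega)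
        refine ⟨pt i, ?_, ?_⟩
        · rw [hfi]
          have h2 := (hg (i - 1) (by omega)).2
          rwa [Nat.sub_add_cancel hpos] at h2
        · rw [hfi1]; exact (hg i hin).1
      · have hieq : i = n := by omega
        subst hieq
        refine ⟨pt n, ?_, ?_⟩
        · rw [hfi]
          have h2 := (hg (n - 1) (by omega)).2
          rwa [Nat.sub_add_cancel hpos] at h2
        · rw [hfn, hptn]; exact hx'
  obtain ⟨p, hp⟩ := nerve_chain_walk f (n + 1) hchain
  refine ⟨p.copy hf0 hfn, ?_⟩
  rw [SimpleGraph.Walk.length_copy]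
  have hnle : (n : ℝ) ≤ 2 * dist x x' / ℓ + 1 := by
    rcases max_cases (Nat.ceil (2 * dist x x' / ℓ)) 1 with ⟨heq, _⟩ | ⟨heq, _⟩
    · rw [hn, heq]
      have := Nat.ceil_lt_add_one (show (0:ℝ) ≤ 2 * dist x x' / ℓ by positivity)
      linarith
    · rw [hn, heq]
      have : (0:ℝ) ≤ 2 * dist x x' / ℓ := by positivity
      simp
      linarith
  have hplen : (p.length : ℝ) ≤ (n : ℝ) + 1 := by exact_mod_cast hp
  have h2 : 2 / ℓ * dist x x' = 2 * dist x x' / ℓ := by ring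
  linarith

end NerveAux

/-- For a cover of a geodesic space by nonempty sets of diameter at most B such that every
set of diameter less than ℓ lies in some member, the nerve graph is connected and any map
sending each point to a member containing it is a quasi-isometry to the nerve graph, with
constants depending only on B and ℓ. -/
theorem statement4 (B ℓ : ℝ) (hB : 0 < B) (hℓ : 0 < ℓ) :
    ∃ L A : ℝ, 1 ≤ L ∧ 0 ≤ A ∧
      ∀ (X : Type) (_ : MetricSpace X) (_ : Nonempty X),
        IsGeodesicSpace X →
        ∀ U : Set (Set X),
          (∀ V ∈ U, (V : Set X).Nonempty) →
          ⋃₀ U = Set.univ →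
          (∀ V ∈ U, EMetric.diam (V : Set X) ≤ ENNReal.ofReal B) →
          (∀ S : Set X, EMetric.diam S < ENNReal.ofReal ℓ → ∃ V ∈ U, S ⊆ V) →
          (nerveGraph U).Connected ∧
          ∀ φ : X → U, (∀ x : X, x ∈ (φ x : Set X)) →
            (∀ x x' : X,
              (1 / L) * dist x x' - A ≤ ((nerveGraph U).dist (φ x) (φ x') : ℝ) ∧
              ((nerveGraph U).dist (φ x) (φ x') : ℝ) ≤ L * dist x x' + A) ∧
            ∀ V : U, ∃ x : X, (nerveGraph U).dist V (φ x) ≤ 1 := by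
  refine ⟨max B (max (2 / ℓ) 1), 2, le_trans (le_max_right _ _) (le_max_right _ _), by norm_num,
    ?_⟩
  intro X _ hX hgeo U hne hcover hBd hsmall
  set L : ℝ := max B (max (2 / ℓ) 1) with hL
  have hL1 : (1 : ℝ) ≤ L := le_trans (le_max_right _ _) (le_max_right _ _)
  have hLB : B ≤ L := le_max_left _ _
  have hLl : 2 / ℓ ≤ L := le_trans (le_max_left _ _) (le_max_right _ _)
  have hL0 : (0 : ℝ) < L := lt_of_lt_of_le one_pos hL1
  -- connectivity
  haveI hUne : Nonempty U := by
    obtain ⟨x⟩ := hX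
    have hxU : x ∈ ⋃₀ U := by rw [hcover]; trivial
    obtain ⟨V, hVU, -⟩ := hxU
    exact ⟨⟨V, hVU⟩⟩
  have hconn : (nerveGraph U).Connected := by
    refine ⟨?_⟩
    intro V W
    obtain ⟨x, hx⟩ := hne V V.2
    obtain ⟨x', hx'⟩ := hne W W.2
    obtain ⟨p, -⟩ := nerve_chain hℓ hgeo hsmall V W x x' hx hx'
    exact p.reachable
  refine ⟨hconn, ?_⟩
  intro φ hφ
  constructor
  · intro x x'
    constructor
    · -- lower bound
      obtain ⟨p, hp⟩ := (hconn (φ x) (φ x')).exists_walk_length_eq_dist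
      have hkey := dist_le_of_nerve_walk hB.le hBd p x (hφ x) x' (hφ x')
      rw [hp] at hkey
      have hinv : 1 / L ≤ 1 / B := one_div_le_one_div_of_le hB hLB
      have hd0 : (0 : ℝ) ≤ dist x x' := dist_nonneg
      have h1 : (1 / L) * dist x x' ≤ (1 / B) * dist x x' :=
        mul_le_mul_of_nonneg_right hinv hd0
      have h2 : (1 / B) * dist x x' ≤ ((nerveGraph U).dist (φ x) (φ x') : ℝ) + 1 := by
        rw [div_mul_eq_mul_div, one_mul, div_le_iff₀ hB]
        nlinarith [hkey]
      linarith
    · -- upper bound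
      obtain ⟨p, hp⟩ := nerve_chain hℓ hgeo hsmall (φ x) (φ x') x x' (hφ x) (hφ x')
      have hd := SimpleGraph.dist_le p
      have : ((nerveGraph U).dist (φ x) (φ x') : ℝ) ≤ (p.length : ℝ) := by exact_mod_cast hd
      have h3 : (2 / ℓ) * dist x x' ≤ L * dist x x' :=
        mul_le_mul_of_nonneg_right hLl dist_nonneg
      linarith
  · intro V
    obtain ⟨x, hx⟩ := hne V V.2
    obtain ⟨p, hp⟩ := nerve_walk_of_inter (V := V) (W := φ x) ⟨x, hx, hφ x⟩
    exact ⟨x, le_trans (SimpleGraph.dist_le p) hp⟩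
end

section
/- Let 𝒫 ⊆ ℍ be a nonempty subset of the hyperbolic plane that is discrete and closed as a subset of ℍ, and let Γ ≤ Isom(ℍ) be a subgroup acting geometrically on ℍ such that γ • 𝒫 = 𝒫 for every γ ∈ Γ. Then Γ has finite index in the setwise stabilizer Stab(𝒫) = {φ ∈ Isom(ℍ) : φ(𝒫) = 𝒫}. -/
open Pointwise

/-- The natural action of the isometry group of the hyperbolic plane on the
hyperbolic plane. -/
noncomputable instance : MulAction (UpperHalfPlane ≃ᵢ UpperHalfPlane) UpperHalfPlane where
  smul φ x := φ x
  one_smul _ := rfl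
  mul_smul _ _ _ := rfl


section AuxiliaryForStatement7

open UpperHalfPlane Submodule


/-- "good" finite configuration: only the trivial circle equation vanishes on it. -/
def GoodSet (F : Set UpperHalfPlane) : Prop :=
  ∀ α β δ : ℝ, (∀ p ∈ F, α * (p.re ^ 2 + p.im ^ 2) + β * p.re + δ = 0) → α = 0 ∧ β = 0 ∧ δ = 0

lemma dist_sq_eq (x p : UpperHalfPlane) :
    dist (x : ℂ) (p : ℂ) ^ 2 = (x.re - p.re) ^ 2 + (x.im - p.im) ^ 2 := by
  rw [Complex.dist_eq, Complex.sq_norm, Complex.normSq_apply]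
  simp [Complex.sub_re, Complex.sub_im, coe_re, coe_im]
  ring

lemma circle_eq_of_dist_eq {x y p : UpperHalfPlane} (h : dist x p = dist y p) :
    ((x.re - p.re) ^ 2 + (x.im - p.im) ^ 2) * y.im
      = ((y.re - p.re) ^ 2 + (y.im - p.im) ^ 2) * x.im := by
  have h2 := congrArg Real.cosh h
  rw [cosh_dist, cosh_dist, dist_sq_eq, dist_sq_eq] at h2
  have hx := x.im_pos
  have hy := y.im_pos
  have hp := p.im_pos
  field_simp at h2
  nlinarith [h2, hp]

lemma rigid {F : Set UpperHalfPlane} (hF : GoodSet F) {x y : UpperHalfPlane}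
    (h : ∀ p ∈ F, dist x p = dist y p) : x = y := by
  have key := hF (y.im - x.im) (2 * (y.re * x.im - x.re * y.im))
      ((x.re ^ 2 + x.im ^ 2) * y.im - (y.re ^ 2 + y.im ^ 2) * x.im) ?_
  · obtain ⟨h1, h2, h3⟩ := key
    have hx := x.im_pos
    have hy := y.im_pos
    have him : x.im = y.im := by linarith
    have hre : x.re = y.re := by
      have h4 : (y.re - x.re) * x.im = 0 := by linear_combination h2 / 2 - x.re * him
      rcases mul_eq_zero.mp h4 with h5 | h5
      · linarith
      · exact absurd h5 (ne_of_gt hx)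
    exact UpperHalfPlane.ext (Complex.ext hre him)
  · intro p hp
    have := circle_eq_of_dist_eq (h p hp)
    linear_combination this

lemma no_circle {P : Set UpperHalfPlane} (hne : P.Nonempty) {C : ℝ} (hC : 0 ≤ C)
    (hdense : ∀ x : UpperHalfPlane, ∃ p ∈ P,
      (x.re - p.re) ^ 2 + (x.im - p.im) ^ 2 ≤ C * (x.im * p.im))
    (α β δ : ℝ)
    (hvan : ∀ p ∈ P, α * (p.re ^ 2 + p.im ^ 2) + β * p.re + δ = 0) :
    α = 0 ∧ β = 0 ∧ δ = 0 := by
  obtain ⟨p₀, hp₀⟩ := hne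
  by_cases hα : α = 0
  · by_cases hβ : β = 0
    · refine ⟨hα, hβ, ?_⟩
      have := hvan p₀ hp₀
      rw [hα, hβ] at this
      linarith
    · exfalso
      -- all points of P lie on the vertical line re = c0
      set c0 : ℝ := -δ / β with hc0
      have hline : ∀ p ∈ P, p.re = c0 := by
        intro p hp
        have := hvan p hp
        rw [hα] at this
        rw [hc0, eq_div_iff hβ]
        linarith
      set s : ℝ := C + 3 with hs
      set x : UpperHalfPlane := UpperHalfPlane.mk ⟨c0 + s, 1⟩ (by norm_num) with hx
      obtain ⟨p, hp, hle⟩ := hdense x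
      have hxre : x.re = c0 + s := rfl
      have hxim : x.im = 1 := rfl
      rw [hxre, hxim, hline p hp] at hle
      have hm := p.im_pos
      nlinarith [sq_nonneg (p.im - C - 2), sq_nonneg (1 - p.im), hm, hle]
  · exfalso
    -- all points of P lie on a circle; imaginary parts bounded by √E
    set E : ℝ := (β ^ 2 / 4 - α * δ) / α ^ 2 with hE
    clear_value E
    have hα2 : (0:ℝ) < α ^ 2 := by positivity
    have hEval : α ^ 2 * E = β ^ 2 / 4 - α * δ := by
      rw [hE]
      field_simp
    have him2 : ∀ p ∈ P, p.im ^ 2 ≤ E := by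
      intro p hp
      have h1 := hvan p hp
      have hkey : α ^ 2 * p.re ^ 2 + α ^ 2 * p.im ^ 2 + α * β * p.re + α * δ = 0 := by
        have : α * (α * (p.re ^ 2 + p.im ^ 2) + β * p.re + δ) = 0 := by rw [h1]; ring
        linarith [this]
      have hsq : 0 ≤ α ^ 2 * p.re ^ 2 + α * β * p.re + β ^ 2 / 4 := by
        nlinarith [sq_nonneg (α * p.re + β / 2)]
      have h2 : α ^ 2 * p.im ^ 2 ≤ α ^ 2 * E := by linarith [hkey, hEval, hsq]
      exact le_of_mul_le_mul_left h2 hα2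
    have hE0 : 0 ≤ E := le_trans (sq_nonneg p₀.im) (him2 p₀ hp₀)
    set sE : ℝ := Real.sqrt E with hsE
    have hsE0 : 0 ≤ sE := Real.sqrt_nonneg E
    have him : ∀ p ∈ P, p.im ≤ sE := by
      intro p hp
      have := him2 p hp
      nlinarith [Real.sq_sqrt hE0, p.im_pos, Real.sqrt_nonneg E]
    set T : ℝ := sE + (C * sE + sE + 1) with hT
    have hT0 : 0 < T := by positivity
    set x : UpperHalfPlane := UpperHalfPlane.mk ⟨0, T⟩ hT0 with hx
    obtain ⟨p, hp, hle⟩ := hdense x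
    have hxim : x.im = T := rfl
    rw [hxim] at hle
    have hm := p.im_pos
    have hmle := him p hp
    nlinarith [sq_nonneg (x.re - p.re), hle, hm, hmle, hC, hsE0,
      mul_le_mul_of_nonneg_left hmle (mul_nonneg hC (le_of_lt hT0))]

lemma eval_dual (f : Module.Dual ℝ (Fin 3 → ℝ)) (w : Fin 3 → ℝ) :
    f w = w 0 * f (Pi.single 0 1) + w 1 * f (Pi.single 1 1) + w 2 * f (Pi.single 2 1) := by
  have hw : w = w 0 • (Pi.single 0 1 : Fin 3 → ℝ) + w 1 • (Pi.single 1 1 : Fin 3 → ℝ)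
      + w 2 • (Pi.single 2 1 : Fin 3 → ℝ) := by
    funext i
    fin_cases i <;> simp [Pi.single_apply]
  conv_lhs => rw [hw]
  simp [map_add, map_smul, smul_eq_mul]

lemma v_injOn : Set.InjOn (fun p : UpperHalfPlane => ![p.re ^ 2 + p.im ^ 2, p.re, 1]) Set.univ := by
  intro p _ q _ h
  have h1 : p.re ^ 2 + p.im ^ 2 = q.re ^ 2 + q.im ^ 2 := by
    have := congrFun h 0; simpa using this
  have h2 : p.re = q.re := by
    have := congrFun h 1; simpa using this
  have h3 : p.im = q.im := by
    have hp := p.im_pos; have hq := q.im_pos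
    have hre2 : p.re ^ 2 = q.re ^ 2 := by rw [h2]
    have him2 : p.im ^ 2 = q.im ^ 2 := by linarith
    nlinarith [him2, hp, hq]
  exact UpperHalfPlane.ext (Complex.ext h2 h3)

lemma exists_goodSet {P : Set UpperHalfPlane} (hne : P.Nonempty) {C : ℝ} (hC : 0 ≤ C)
    (hdense : ∀ x : UpperHalfPlane, ∃ p ∈ P,
      (x.re - p.re) ^ 2 + (x.im - p.im) ^ 2 ≤ C * (x.im * p.im)) :
    ∃ F : Set UpperHalfPlane, F.Finite ∧ F ⊆ P ∧ GoodSet F := by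
  classical
  set v : UpperHalfPlane → (Fin 3 → ℝ) := fun p => ![p.re ^ 2 + p.im ^ 2, p.re, 1] with hv
  by_cases htop : span ℝ (v '' P) = ⊤
  · -- extract a finite spanning subset
    have hmem : ∀ i : Fin 3, ∃ t : Finset (Fin 3 → ℝ), ↑t ⊆ v '' P ∧
        (Pi.single i 1 : Fin 3 → ℝ) ∈ span ℝ (↑t : Set (Fin 3 → ℝ)) := by
      intro i
      exact Submodule.mem_span_finite_of_mem_span (by rw [htop]; trivial)
    obtain ⟨t0, ht0, hm0⟩ := hmem 0
    obtain ⟨t1, ht1, hm1⟩ := hmem 1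
    obtain ⟨t2, ht2, hm2⟩ := hmem 2
    set t : Finset (Fin 3 → ℝ) := t0 ∪ t1 ∪ t2 with ht
    have htP : ↑t ⊆ v '' P := by
      intro w hw
      simp only [ht, Finset.coe_union, Set.mem_union] at hw
      rcases hw with (hw | hw) | hw
      exacts [ht0 hw, ht1 hw, ht2 hw]
    have htspan : span ℝ (↑t : Set (Fin 3 → ℝ)) = ⊤ := by
      rw [eq_top_iff]
      rw [← (Pi.basisFun ℝ (Fin 3)).span_eq, span_le]
      rintro w ⟨i, rfl⟩
      have hsingle : ∀ j : Fin 3, (Pi.single j 1 : Fin 3 → ℝ) ∈ span ℝ (↑t : Set (Fin 3 → ℝ)) := by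
        intro j
        fin_cases j
        · exact span_mono (by intro w hw; simp [ht]; tauto) hm0
        · exact span_mono (by intro w hw; simp [ht]; tauto) hm1
        · exact span_mono (by intro w hw; simp [ht]; tauto) hm2
      simpa [Pi.basisFun_apply] using hsingle i
    refine ⟨P ∩ v ⁻¹' ↑t, ?_, Set.inter_subset_left, ?_⟩
    · exact Set.Finite.subset (Set.Finite.preimage (v_injOn.mono (Set.subset_univ _))
        t.finite_toSet) Set.inter_subset_right
    · intro α β δ hvan
      set φ : Module.Dual ℝ (Fin 3 → ℝ) :=
        (α • LinearMap.proj 0 + β • LinearMap.proj 1 + δ • LinearMap.proj 2 :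
          (Fin 3 → ℝ) →ₗ[ℝ] ℝ) with hφ
      have hφval : ∀ w : Fin 3 → ℝ, φ w = α * w 0 + β * w 1 + δ * w 2 := by
        intro w; simp [hφ, smul_eq_mul]
      have hφ0 : φ = 0 := LinearMap.ext_on htspan (by
        intro w hw
        obtain ⟨p, hp, rfl⟩ := htP hw
        have hpF : p ∈ P ∩ v ⁻¹' ↑t := ⟨hp, hw⟩
        have := hvan p hpF
        rw [hφval]
        simp only [hv, Matrix.cons_val_zero, Matrix.cons_val_one, Matrix.head_cons]
        simpa using this)
      refine ⟨?_, ?_, ?_⟩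
      · have := congrArg (fun f : Module.Dual ℝ (Fin 3 → ℝ) => f ![1,0,0]) hφ0
        simpa [hφval] using this
      · have := congrArg (fun f : Module.Dual ℝ (Fin 3 → ℝ) => f ![0,1,0]) hφ0
        simpa [hφval] using this
      · have := congrArg (fun f : Module.Dual ℝ (Fin 3 → ℝ) => f ![0,0,1]) hφ0
        simpa [hφval] using this
  · exfalso
    obtain ⟨f, hf0, hfbot⟩ := Submodule.exists_dual_map_eq_bot_of_lt_top
      (lt_top_iff_ne_top.mpr htop) inferInstance
    have hfvan : ∀ p ∈ P, f (Pi.single 0 1) * (p.re ^ 2 + p.im ^ 2)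
        + f (Pi.single 1 1) * p.re + f (Pi.single 2 1) = 0 := by
      intro p hp
      have hvp : f (v p) = 0 := by
        have : f (v p) ∈ Submodule.map f (span ℝ (v '' P)) :=
          Submodule.mem_map_of_mem (subset_span ⟨p, hp, rfl⟩)
        rw [hfbot] at this
        simpa using this
      rw [eval_dual f (v p)] at hvp
      simp only [hv, Matrix.cons_val_zero, Matrix.cons_val_one, Matrix.head_cons,
        Matrix.cons_val_two, Matrix.tail_cons, one_mul] at hvp
      linarith [hvp]
    obtain ⟨h0, h1, h2⟩ := no_circle hne hC hdense _ _ _ hfvan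
    apply hf0
    apply LinearMap.ext
    intro w
    rw [eval_dual f w, h0, h1, h2]
    simp

end AuxiliaryForStatement7

/-- If a nonempty discrete closed subset P of the hyperbolic plane is stabilized by a
uniform lattice Γ of Isom(ℍ²), then Γ has finite index in the setwise stabilizer of P. -/
theorem statement7 (P : Set UpperHalfPlane) (hne : P.Nonempty)
    (hclosed : IsClosed P) (hdisc : DiscreteTopology P)
    (Γ : Subgroup (UpperHalfPlane ≃ᵢ UpperHalfPlane))
    (hgeo : IsGeometricAction Γ UpperHalfPlane)
    (hstab : ∀ γ ∈ Γ, γ • P = P) :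
    (Γ.subgroupOf (MulAction.stabilizer (UpperHalfPlane ≃ᵢ UpperHalfPlane) P)).FiniteIndex := by
  classical
  set Iso := UpperHalfPlane ≃ᵢ UpperHalfPlane
  set Λ := MulAction.stabilizer Iso P with hΛ
  set Γ' := Γ.subgroupOf Λ with hΓ'
  have hsmul_def : ∀ (φ : Iso) (x : UpperHalfPlane), φ • x = φ x := fun _ _ => rfl
  have hdist : ∀ (φ : Iso) (x y : UpperHalfPlane), dist (φ • x) (φ • y) = dist x y := by
    intro φ x y
    rw [hsmul_def, hsmul_def]
    exact φ.dist_eq x y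
  have hΓΛ : ∀ g ∈ Γ, g ∈ Λ := by
    intro g hg
    exact MulAction.mem_stabilizer_iff.mpr (hstab g hg)
  have hPinv : ∀ lam : Λ, ∀ p ∈ P, (lam : Iso) • p ∈ P := by
    intro lam p hp
    have h1 : (lam : Iso) • P = P := MulAction.mem_stabilizer_iff.mp lam.2
    rw [← h1]
    exact Set.smul_mem_smul_set hp
  obtain ⟨-, -, K, hKc, hKcover⟩ := hgeo
  obtain ⟨p₀, hp₀⟩ := hne
  -- K is nonempty
  have hmemK : ∀ x : UpperHalfPlane, ∃ g : Γ, ((g : Iso))⁻¹ • x ∈ K := by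
    intro x
    have : x ∈ ⋃ g : Γ, g • K := by rw [hKcover]; trivial
    obtain ⟨g, hg⟩ := Set.mem_iUnion.mp this
    refine ⟨g, ?_⟩
    have := Set.mem_smul_set_iff_inv_smul_mem.mp hg
    exact this
  obtain ⟨g₀, hg₀⟩ := hmemK p₀
  set x₀ : UpperHalfPlane := ((g₀ : Iso))⁻¹ • p₀ with hx₀
  obtain ⟨R, hR⟩ := hKc.isBounded.subset_closedBall x₀
  have hR0 : 0 ≤ R := by
    have h1 := Metric.mem_closedBall.mp (hR hg₀)
    have h2 := dist_self x₀
    linarith [h1, h2, (dist_nonneg : (0:ℝ) ≤ dist x₀ x₀)]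
  -- coarse density of P
  set D : ℝ := R + dist x₀ p₀ with hD
  have hD0 : 0 ≤ D := by positivity
  have hdenseD : ∀ x : UpperHalfPlane, ∃ p ∈ P, dist x p ≤ D := by
    intro x
    obtain ⟨g, hg⟩ := hmemK x
    refine ⟨(g : Iso) • p₀, ?_, ?_⟩
    · rw [← hstab (g : Iso) g.2]
      exact Set.smul_mem_smul_set hp₀
    · have h1 : dist x ((g : Iso) • p₀) = dist (((g : Iso))⁻¹ • x) p₀ := by
        rw [← hdist ((g : Iso))⁻¹ x ((g : Iso) • p₀), inv_smul_smul]
      rw [h1]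
      have h2 := Metric.mem_closedBall.mp (hR hg)
      calc dist (((g : Iso))⁻¹ • x) p₀ ≤ dist (((g : Iso))⁻¹ • x) x₀ + dist x₀ p₀ :=
              dist_triangle _ _ _
        _ ≤ R + dist x₀ p₀ := by linarith [h2]
  -- convert to the quadratic density form
  set C : ℝ := 2 * (Real.cosh D - 1) with hC
  have hC0 : 0 ≤ C := by
    have := Real.one_le_cosh D
    linarith
  have hdenseC : ∀ x : UpperHalfPlane, ∃ p ∈ P,
      (x.re - p.re) ^ 2 + (x.im - p.im) ^ 2 ≤ C * (x.im * p.im) := by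
    intro x
    obtain ⟨p, hp, hdxp⟩ := hdenseD x
    refine ⟨p, hp, ?_⟩
    have h1 : Real.cosh (dist x p) ≤ Real.cosh D := by
      rw [Real.cosh_le_cosh, abs_of_nonneg dist_nonneg, abs_of_nonneg hD0]
      exact hdxp
    rw [UpperHalfPlane.cosh_dist] at h1
    rw [← dist_sq_eq]
    have him : 0 < 2 * x.im * p.im := by positivity
    have h2 : dist (x : ℂ) (p : ℂ) ^ 2 / (2 * x.im * p.im) ≤ Real.cosh D - 1 := by linarith
    have h3 := (div_le_iff₀ him).mp h2
    calc dist (x : ℂ) (p : ℂ) ^ 2 ≤ (Real.cosh D - 1) * (2 * x.im * p.im) := h3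
      _ = C * (x.im * p.im) := by rw [hC]; ring
  -- a good finite subset of P
  obtain ⟨F, hFfin, hFP, hFgood⟩ := exists_goodSet ⟨p₀, hp₀⟩ hC0 hdenseC
  obtain ⟨RF, hRF⟩ := hFfin.isBounded.subset_closedBall x₀
  -- the finite "target" set S
  set S : Set UpperHalfPlane := P ∩ Metric.closedBall x₀ (RF + R) with hS
  have hSfin : S.Finite := by
    have hScomp : IsCompact S :=
      (isCompact_closedBall x₀ (RF + R)).inter_left hclosed
    have : DiscreteTopology (S : Set UpperHalfPlane) :=
      DiscreteTopology.of_subset hdisc Set.inter_subset_left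
    exact hScomp.finite ⟨this⟩
  -- the set N of stabilizer elements moving x₀ into K
  set N : Set Λ := {lam : Λ | (lam : Iso) • x₀ ∈ K} with hN
  haveI hFinF : Finite F := hFfin.to_subtype
  have hNfin : N.Finite := by
    set T : Set (F → UpperHalfPlane) := Set.pi Set.univ (fun _ => S) with hT
    have hTfin : T.Finite := Set.Finite.pi (fun _ => hSfin)
    set gmap : Λ → (F → UpperHalfPlane) := fun lam p => (lam : Iso) • (p : UpperHalfPlane)
      with hgmap
    have himg : ∀ lam ∈ N, gmap lam ∈ T := by
      intro lam hlam
      intro p _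
      constructor
      · exact hPinv lam p (hFP p.2)
      · rw [Metric.mem_closedBall]
        have h1 : dist (gmap lam p) ((lam : Iso) • x₀) = dist (p : UpperHalfPlane) x₀ :=
          hdist _ _ _
        have h2 : dist ((lam : Iso) • x₀) x₀ ≤ R := Metric.mem_closedBall.mp (hR hlam)
        have h3 : dist (p : UpperHalfPlane) x₀ ≤ RF := Metric.mem_closedBall.mp (hRF p.2)
        calc dist (gmap lam p) x₀ ≤ dist (gmap lam p) ((lam : Iso) • x₀)
            + dist ((lam : Iso) • x₀) x₀ := dist_triangle _ _ _
          _ ≤ RF + R := by rw [h1]; linarith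
    have hinj : Set.InjOn gmap N := by
      intro lam hlam mu hmu heq
      set ν : Λ := mu⁻¹ * lam with hν
      have hfix : ∀ p ∈ F, (ν : Iso) • p = p := by
        intro p hp
        have hpt : (lam : Iso) • p = (mu : Iso) • p := congrFun heq ⟨p, hp⟩
        have : (ν : Iso) • p = (mu : Iso)⁻¹ • ((lam : Iso) • p) := by
          rw [hν, Subgroup.coe_mul, mul_smul]
          norm_num
        rw [this, hpt, inv_smul_smul]
      have hid : ∀ z : UpperHalfPlane, (ν : Iso) • z = z := by
        intro z
        refine rigid hFgood ?_
        intro p hp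
        have h1 : dist ((ν : Iso) • z) ((ν : Iso) • p) = dist z p := hdist _ _ _
        rw [hfix p hp] at h1
        exact h1
      have hν1 : (ν : Iso) = 1 := by
        apply IsometryEquiv.ext
        intro z
        exact hid z
      have : ν = (1 : Λ) := by
        apply Subtype.ext
        rw [hν1]
        rfl
      rw [hν] at this
      exact (inv_mul_eq_one.mp this).symm
    have himg' : gmap '' N ⊆ T := by
      rintro _ ⟨lam, hlam, rfl⟩
      exact himg lam hlam
    exact Set.Finite.of_finite_image (hTfin.subset himg') hinj
  -- finitely many cosets
  haveI : Finite N := hNfin.to_subtype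
  have hq : Function.Surjective
      (fun μ : N => (QuotientGroup.mk ((μ : ↥Λ)⁻¹) : (↥Λ) ⧸ Γ')) := by
    intro c
    refine Quotient.inductionOn' c ?_
    intro lam
    obtain ⟨g, hg⟩ := hmemK (((lam : Iso))⁻¹ • x₀)
    set μ₀ : Λ := (⟨((g : Iso))⁻¹, Λ.inv_mem (hΓΛ _ g.2)⟩ : Λ) * lam⁻¹ with hμ₀
    have hμ₀N : μ₀ ∈ N := by
      show (μ₀ : Iso) • x₀ ∈ K
      have hcoe : (μ₀ : Iso) = ((g : Iso))⁻¹ * ((lam : Iso))⁻¹ := by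
        rw [hμ₀, Subgroup.coe_mul]
        rfl
      rw [hcoe, mul_smul]
      exact hg
    refine ⟨⟨μ₀, hμ₀N⟩, ?_⟩
    show QuotientGroup.mk (μ₀⁻¹) = _
    have : Quotient.mk'' lam = QuotientGroup.mk (s := Γ') lam := rfl
    rw [this]
    rw [QuotientGroup.eq]
    have hval : (μ₀⁻¹)⁻¹ * lam = (⟨((g : Iso))⁻¹, Λ.inv_mem (hΓΛ _ g.2)⟩ : Λ) := by
      rw [inv_inv, hμ₀, mul_assoc, inv_mul_cancel, mul_one]
    rw [hval]
    rw [hΓ', Subgroup.mem_subgroupOf]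
    exact Γ.inv_mem g.2
  haveI hfq : Finite ((↥Λ) ⧸ Γ') :=
    Finite.of_surjective (fun μ : N => (QuotientGroup.mk ((μ : ↥Λ)⁻¹) : (↥Λ) ⧸ Γ')) hq
  exact @Subgroup.finiteIndex_of_finite_quotient _ _ Γ' hfq
end
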